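/- Let p ≥ 5 be prime. For every k with 1 ≤ k ≤ p, ∑_{i=0}^{p-1} C(2i, i+k) ≡ ((p−k)/3) (mod p), where ((p−k)/3) denotes the Legendre-symbol-like value which is 1, −1, or 0 according as p−k ≡ 1, 2, or 0 (mod 3). -/

import Mathlib

/-- The value which is 1, −1, or 0 according as m ≡ 1, 2, or 0 (mod 3). -/
def chi3 (m : ℕ) : ℤ :=
  if m % 3 = 1 then 1 else if m % 3 = 2 then -1 else 0

lemma chi3_triple (m : ℕ) : chi3 m + chi3 (m + 1) + chi3 (m + 2) = 0 := by
  have h3 : m % 3 = 0 ∨ m % 3 = 1 ∨ m % 3 = 2 := by omega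
  have h1 : (m + 1) % 3 = (m % 3 + 1) % 3 := by omega
  have h2 : (m + 2) % 3 = (m % 3 + 2) % 3 := by omega
  rcases h3 with h | h | h <;> simp [chi3, h1, h2, h]

/-- Pascal twice. -/
lemma pascal2 (i k : ℕ) :
    (2 * (i + 1)).choose (i + 1 + (k + 1)) =
      (2 * i).choose (i + k) + 2 * (2 * i).choose (i + (k + 1)) + (2 * i).choose (i + (k + 2)) := by
  have h1 : ∀ n j : ℕ, (n + 1 + 1).choose (j + 1 + 1)
      = n.choose j + 2 * n.choose (j + 1) + n.choose (j + 1 + 1) := by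
    intro n j
    rw [Nat.choose_succ_succ (n + 1) (j + 1), Nat.choose_succ_succ n j,
      Nat.choose_succ_succ n (j + 1)]
    ring
  have e1 : 2 * (i + 1) = 2 * i + 1 + 1 := by ring
  have e2 : i + 1 + (k + 1) = i + k + 1 + 1 := by ring
  have e3 : i + (k + 1) = i + k + 1 := by ring
  have e4 : i + (k + 2) = i + k + 1 + 1 := by ring
  rw [e1, e2, e3, e4, h1]

/-- The key natural-number identity, for `k ≥ 1`. -/
lemma key_nat (p k : ℕ) (hk : 1 ≤ k) :
    (∑ i ∈ Finset.range p, (2 * i).choose (i + k))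
      + 2 * (∑ i ∈ Finset.range p, (2 * i).choose (i + (k + 1)))
      + (∑ i ∈ Finset.range p, (2 * i).choose (i + (k + 2)))
      = (∑ i ∈ Finset.range p, (2 * i).choose (i + (k + 1))) + (2 * p).choose (p + (k + 1)) := by
  have h0 : (2 * 0).choose (0 + (k + 1)) = 0 := Nat.choose_eq_zero_of_lt (by omega)
  calc (∑ i ∈ Finset.range p, (2 * i).choose (i + k))
      + 2 * (∑ i ∈ Finset.range p, (2 * i).choose (i + (k + 1)))
      + (∑ i ∈ Finset.range p, (2 * i).choose (i + (k + 2)))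
      = ∑ i ∈ Finset.range p, (2 * (i + 1)).choose (i + 1 + (k + 1)) := by
        rw [Finset.mul_sum, ← Finset.sum_add_distrib, ← Finset.sum_add_distrib]
        exact Finset.sum_congr rfl fun i _ => (pascal2 i k).symm
    _ = (∑ i ∈ Finset.range p, (2 * (i + 1)).choose (i + 1 + (k + 1)))
        + (2 * 0).choose (0 + (k + 1)) := by rw [h0, add_zero]
    _ = ∑ i ∈ Finset.range (p + 1), (2 * i).choose (i + (k + 1)) :=
        (Finset.sum_range_succ' (fun i => (2 * i).choose (i + (k + 1))) p).symm
    _ = (∑ i ∈ Finset.range p, (2 * i).choose (i + (k + 1))) + (2 * p).choose (p + (k + 1)) :=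
        Finset.sum_range_succ _ p

lemma dvd_central (p : ℕ) (hp : p.Prime) (j : ℕ) (hj1 : 1 ≤ j) (hjp : j < p) :
    ((2 * p).choose (p + j) : ZMod p) = 0 := by
  haveI : Fact p.Prime := ⟨hp⟩
  have h := (Choose.choose_modEq_choose_mod_mul_choose_div
    (n := 2 * p) (k := p + j) (p := p))
  have hmod1 : (2 * p) % p = 0 := Nat.mul_mod_left 2 p
  have hmod2 : (p + j) % p = j := by
    rw [Nat.add_mod_left, Nat.mod_eq_of_lt hjp]
  have hz : Nat.choose 0 j = 0 := Nat.choose_eq_zero_of_lt (by omega)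
  have h2 : ((2 * p).choose (p + j) : ℤ) ≡ 0 [ZMOD (p : ℕ)] := by
    simpa [hmod1, hmod2, hz] using h
  have h3 := (ZMod.intCast_eq_intCast_iff _ _ _).mpr h2
  simpa using h3

/-- The recurrence in `ZMod p`. -/
lemma rec_zmod (p : ℕ) (hp : p.Prime) (k : ℕ) (hk : 1 ≤ k) (hkp : k + 1 < p) :
    (∑ i ∈ Finset.range p, ((2 * i).choose (i + k) : ZMod p))
      + (∑ i ∈ Finset.range p, ((2 * i).choose (i + (k + 1)) : ZMod p))
      + (∑ i ∈ Finset.range p, ((2 * i).choose (i + (k + 2)) : ZMod p)) = 0 := by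
  have h := key_nat p k hk
  have hcast := congrArg (fun n : ℕ => (n : ZMod p)) h
  push_cast at hcast
  rw [dvd_central p hp (k + 1) (by omega) (by omega), add_zero] at hcast
  linear_combination hcast

lemma chi3_cast_eq (p : ℕ) (hp : p.Prime) (hp5 : 5 ≤ p) :
    ∀ d : ℕ, ∀ k : ℕ, 1 ≤ k → k ≤ p → p - k = d →
      (∑ i ∈ Finset.range p, ((2 * i).choose (i + k) : ZMod p)) = (chi3 (p - k) : ZMod p) := by
  intro d
  induction d using Nat.strong_induction_on with
  | _ d ih =>
    intro k hk1 hkp hd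
    rcases d with _ | _ | d
    · -- d = 0, k = p : all terms vanish
      have hz : ∀ i ∈ Finset.range p, ((2 * i).choose (i + k) : ZMod p) = 0 := by
        intro i hi
        simp only [Finset.mem_range] at hi
        rw [Nat.choose_eq_zero_of_lt (by omega)]
        simp
      rw [Finset.sum_congr rfl hz, hd]
      simp [chi3]
    · -- d = 1, k = p - 1
      have hpk : p = k + 1 := by omega
      subst hpk
      rw [Finset.sum_range_succ]
      have hz : ∀ i ∈ Finset.range k, ((2 * i).choose (i + k) : ZMod (k + 1)) = 0 := by
        intro i hi
        simp only [Finset.mem_range] at hi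
        rw [Nat.choose_eq_zero_of_lt (by omega)]
        simp
      rw [Finset.sum_congr rfl hz]
      rw [show k + k = 2 * k from by ring, Nat.choose_self]
      rw [show k + 1 - k = 1 from by omega]
      simp [chi3]
    · -- step case
      have hk2 : k + 2 ≤ p := by omega
      have h1 := ih (d + 1) (by omega) (k + 1) (by omega) (by omega) (by omega)
      have h2 := ih d (by omega) (k + 2) (by omega) (by omega) (by omega)
      have hrec := rec_zmod p hp k hk1 (by omega)
      rw [h1, h2] at hrec
      rw [show p - (k + 1) = d + 1 from by omega, show p - (k + 2) = d from by omega] at hrec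
      rw [show p - k = d + 2 from by omega]
      have hc : chi3 (d + 2) = -chi3 (d + 1) - chi3 d := by
        have := chi3_triple d; linarith
      rw [hc]
      push_cast
      linear_combination hrec

theorem sum_binom_shift (p : ℕ) (hp : p.Prime) (hp5 : 5 ≤ p)
    (k : ℕ) (hk1 : 1 ≤ k) (hkp : k ≤ p) :
    (∑ i ∈ Finset.range p, ((2 * i).choose (i + k) : ℤ)) ≡ chi3 (p - k) [ZMOD (p : ℤ)] := by
  have h := chi3_cast_eq p hp hp5 (p - k) k hk1 hkp rfl
  have hc : ((∑ i ∈ Finset.range p, ((2 * i).choose (i + k) : ℤ) : ℤ) : ZMod p)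
      = ((chi3 (p - k) : ℤ) : ZMod p) := by
    push_cast
    exact_mod_cast h
  exact (ZMod.intCast_eq_intCast_iff _ _ _).mp hc
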